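/- Let d ≥ 2 and let v : Fin d → ℝ satisfy ∑_j v_j = 1 and ∑_j v_j² = d. Writing v_max = max_j v_j, v_min = min_j v_j, and ‖v‖₁ = ∑_j |v_j|, one has (1/2)·[v_max·(‖v‖₁ − 1) + |v_min|·(‖v‖₁ + 1)] ≥ d − √(d+1) + (2/d)√(d+1) − 2/d, and equality holds if and only if v takes the value ((d−1)√(d+1) + 1)/d at exactly one coordinate and the value (1 − √(d+1))/d at the remaining d−1 coordinates. -/

import Mathlib

private lemma dbl_sum_sq {ι : Type*} (T : Finset ι) (f : ι → ℝ) :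
    ∑ i ∈ T, ∑ j ∈ T, (f i - f j)^2 = 2*((T.card : ℝ) * (∑ i ∈ T, f i^2) - (∑ i ∈ T, f i)^2) := by
  have h : ∀ i ∈ T, ∑ j ∈ T, (f i - f j)^2
      = (T.card : ℝ) * f i ^ 2 - 2 * f i * (∑ j ∈ T, f j) + ∑ j ∈ T, f j ^ 2 := by
    intro i _
    simp only [sub_sq, Finset.sum_add_distrib, Finset.sum_sub_distrib, Finset.sum_const,
      nsmul_eq_mul, mul_assoc, ← Finset.mul_sum]
  rw [Finset.sum_congr rfl h]
  simp only [Finset.sum_add_distrib, Finset.sum_sub_distrib, Finset.sum_const, nsmul_eq_mul,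
    ← Finset.mul_sum, ← Finset.sum_mul, mul_assoc]
  ring

set_option maxHeartbeats 4000000 in
/-- Lemma S1: If `d ≥ 2` and `v : Fin d → ℝ` satisfies `∑ v j = 1` and
`∑ (v j)² = d`, then with `v_max = max_j v j`, `v_min = min_j v j`, `‖v‖₁ = ∑ |v j|`,
`(1/2)[v_max(‖v‖₁ − 1) + |v_min|(‖v‖₁ + 1)] ≥ d − √(d+1) + (2/d)√(d+1) − 2/d`, with equality
iff `v` takes the value `((d−1)√(d+1)+1)/d` at exactly one coordinate and `(1 − √(d+1))/d`
elsewhere. -/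
theorem stmt_12 (d : ℕ) (hd : 2 ≤ d) (v : Fin d → ℝ)
    (hsum : ∑ j, v j = 1) (hsq : ∑ j, v j ^ 2 = d) :
    ((d : ℝ) - Real.sqrt (d + 1) + (2 / d) * Real.sqrt (d + 1) - 2 / d ≤
      (1 / 2 : ℝ) * ((⨆ j, v j) * ((∑ j, |v j|) - 1) + |⨅ j, v j| * ((∑ j, |v j|) + 1))) ∧
    ((1 / 2 : ℝ) * ((⨆ j, v j) * ((∑ j, |v j|) - 1) + |⨅ j, v j| * ((∑ j, |v j|) + 1)) =
        (d : ℝ) - Real.sqrt (d + 1) + (2 / d) * Real.sqrt (d + 1) - 2 / d ↔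
      ∃ j₀, v j₀ = (((d : ℝ) - 1) * Real.sqrt (d + 1) + 1) / d ∧
        ∀ j, j ≠ j₀ → v j = (1 - Real.sqrt (d + 1)) / d) := by
  have hd2R : (2:ℝ) ≤ (d:ℝ) := by exact_mod_cast hd
  have hd0 : (0:ℝ) < (d:ℝ) := by linarith
  haveI : Nonempty (Fin d) := Fin.pos_iff_nonempty.mp (by omega)
  haveI : Nontrivial (Fin d) := Fin.nontrivial_iff_two_le.mpr hd
  set s : ℝ := Real.sqrt ((d:ℝ) + 1) with hs_def
  have hs0 : 0 ≤ s := Real.sqrt_nonneg _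
  have hs2 : s ^ 2 = (d:ℝ) + 1 := Real.sq_sqrt (by linarith)
  have hs1 : 1 < s := by nlinarith
  set M : ℝ := ⨆ j, v j with hM_def
  set m : ℝ := ⨅ j, v j with hm_def
  set S : ℝ := ∑ j, |v j| with hS_def
  obtain ⟨jM, hjM⟩ : ∃ i, v i = M := exists_eq_ciSup_of_finite
  obtain ⟨jm, hjm⟩ : ∃ i, v i = m := exists_eq_ciInf_of_finite
  have hvM : ∀ j, v j ≤ M := fun j => le_ciSup (Set.Finite.bddAbove (Set.finite_range v)) j
  have hvm : ∀ j, m ≤ v j := fun j => ciInf_le (Set.Finite.bddBelow (Set.finite_range v)) j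
  -- min is negative
  have hm0 : m < 0 := by
    by_contra h
    push_neg at h
    have h1 : ∀ j, 0 ≤ v j := fun j => le_trans h (hvm j)
    have h2 : ∀ j, v j ≤ 1 := by
      intro j
      rw [← hsum]
      exact Finset.single_le_sum (fun i _ => h1 i) (Finset.mem_univ j)
    have h3 : ∑ j, v j ^ 2 ≤ ∑ j, v j :=
      Finset.sum_le_sum fun j _ => by nlinarith [h1 j, h2 j]
    rw [hsq, hsum] at h3
    linarith
  -- max is positive
  have hM0 : 0 < M := by
    have h1 : (1:ℝ) ≤ (d:ℝ) * M := by
      have := Finset.sum_le_sum (fun j (_ : j ∈ Finset.univ) => hvM j)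
      rw [hsum] at this
      simpa [Finset.sum_const, Finset.card_univ, nsmul_eq_mul] using this
    nlinarith
  have habs : |m| = -m := abs_of_neg hm0
  have hne : jM ≠ jm := by
    intro h
    rw [h, hjm] at hjM
    linarith
  -- Inequality (I):  2d ≤ M(S+1) + (−m)(S−1)
  have hI : 2*(d:ℝ) ≤ M*(S+1) + (-m)*(S-1) := by
    have key : ∀ j ∈ Finset.univ, 2 * v j^2 ≤ M*(|v j| + v j) + (-m)*(|v j| - v j) := by
      intro j _
      rcases le_or_gt 0 (v j) with h | h
      · rw [abs_of_nonneg h]; nlinarith [hvM j, hm0]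
      · rw [abs_of_neg h]; nlinarith [hvm j]
    have h1 : ∑ j, 2 * v j ^ 2 ≤ ∑ j, (M*(|v j| + v j) + (-m)*(|v j| - v j)) :=
      Finset.sum_le_sum key
    rw [← Finset.mul_sum, hsq] at h1
    have h2 : ∑ j, (M*(|v j| + v j) + (-m)*(|v j| - v j))
        = M*(S+1) + (-m)*(S-1) := by
      rw [Finset.sum_add_distrib, ← Finset.mul_sum, ← Finset.mul_sum,
        Finset.sum_add_distrib, Finset.sum_sub_distrib, hsum, ← hS_def]
    rw [h2] at h1
    linarith
  -- Inequality (A)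
  have hAsum : ∑ j, (M - v j)*(v j - m) = (M + m) - (d:ℝ) - (d:ℝ)*(M*m) := by
    have h : ∀ j ∈ Finset.univ, (M - v j)*(v j - m) = (M+m)*(v j) - v j^2 - M*m :=
      fun j _ => by ring
    rw [Finset.sum_congr rfl h, Finset.sum_sub_distrib, Finset.sum_sub_distrib,
      ← Finset.mul_sum, hsum, hsq, Finset.sum_const, Finset.card_univ, Fintype.card_fin,
      nsmul_eq_mul]
    ring
  have hA : 0 ≤ (M + m) - (d:ℝ) - (d:ℝ)*(M*m) := by
    rw [← hAsum]
    exact Finset.sum_nonneg fun j _ =>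
      mul_nonneg (by linarith [hvM j]) (by linarith [hvm j])
  -- Inequality (B) via Cauchy–Schwarz on the middle entries
  set T : Finset (Fin d) := (Finset.univ.erase jM).erase jm with hT_def
  have hjm_mem : jm ∈ Finset.univ.erase jM := Finset.mem_erase.mpr ⟨fun h => hne h.symm, Finset.mem_univ _⟩
  have hTcard : (T.card : ℝ) = (d:ℝ) - 2 := by
    rw [hT_def, Finset.card_erase_of_mem hjm_mem, Finset.card_erase_of_mem (Finset.mem_univ _),
      Finset.card_univ, Fintype.card_fin]
    have h : d - 1 - 1 = d - 2 := by omega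
    rw [h, Nat.cast_sub hd]
    norm_num
  have hTsum : ∑ j ∈ T, v j = 1 - M - m := by
    have e1 : ∑ j ∈ Finset.univ.erase jM, v j + v jM = ∑ j, v j :=
      Finset.sum_erase_add _ _ (Finset.mem_univ jM)
    have e2 : ∑ j ∈ T, v j + v jm = ∑ j ∈ Finset.univ.erase jM, v j :=
      Finset.sum_erase_add _ _ hjm_mem
    rw [hjM] at e1; rw [hjm] at e2; rw [hsum] at e1
    linarith
  have hTsq : ∑ j ∈ T, v j ^ 2 = (d:ℝ) - M^2 - m^2 := by
    have e1 : ∑ j ∈ Finset.univ.erase jM, v j ^ 2 + v jM ^ 2 = ∑ j, v j ^ 2 :=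
      Finset.sum_erase_add _ _ (Finset.mem_univ jM)
    have e2 : ∑ j ∈ T, v j ^ 2 + v jm ^ 2 = ∑ j ∈ Finset.univ.erase jM, v j ^ 2 :=
      Finset.sum_erase_add _ _ hjm_mem
    rw [hjM] at e1; rw [hjm] at e2; rw [hsq] at e1
    linarith
  have hBdbl : 0 ≤ 2*(((d:ℝ)-2) * ((d:ℝ) - M^2 - m^2) - (1 - M - m)^2) := by
    have h0 : 0 ≤ ∑ i ∈ T, ∑ j ∈ T, (v i - v j)^2 :=
      Finset.sum_nonneg fun i _ => Finset.sum_nonneg fun j _ => sq_nonneg _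
    rw [dbl_sum_sq, hTcard, hTsum, hTsq] at h0
    exact h0
  have hB : (1 - M - m)^2 ≤ ((d:ℝ)-2) * ((d:ℝ) - M^2 - m^2) := by linarith
  -- key bound : d(M+m) − 2 ≤ (d−2)s
  have hident : ((d:ℝ)-1)*((((d:ℝ)-2)*s)^2 - ((d:ℝ)*(M+m)-2)^2)
      = (d:ℝ)*(2*((d:ℝ)-2)*((M+m) - (d:ℝ) - (d:ℝ)*(M*m))
        + (d:ℝ)*(((d:ℝ)-2)*((d:ℝ)-M^2-m^2) - (1-M-m)^2)) := by
    linear_combination ((d:ℝ)-1)*((d:ℝ)-2)^2 * hs2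
  have hprodpos : 0 ≤ ((d:ℝ)-1)*((((d:ℝ)-2)*s)^2 - ((d:ℝ)*(M+m)-2)^2) := by
    rw [hident]
    apply mul_nonneg hd0.le
    have t1 : 0 ≤ 2*((d:ℝ)-2)*((M+m) - (d:ℝ) - (d:ℝ)*(M*m)) :=
      mul_nonneg (by linarith) hA
    have t2 : 0 ≤ (d:ℝ)*(((d:ℝ)-2)*((d:ℝ)-M^2-m^2) - (1-M-m)^2) :=
      mul_nonneg hd0.le (by linarith)
    linarith
  have husq : ((d:ℝ)*(M+m) - 2)^2 ≤ (((d:ℝ)-2)*s)^2 := by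
    have hd1 : (0:ℝ) < (d:ℝ) - 1 := by linarith
    have := (mul_nonneg_iff_of_pos_left hd1).mp hprodpos
    linarith
  have hu : (d:ℝ)*(M+m) - 2 ≤ ((d:ℝ)-2)*s :=
    (abs_le_of_sq_le_sq' husq (mul_nonneg (by linarith) hs0)).2
  -- F ≥ d − (M+m)
  have hF1 : (d:ℝ) - (M+m) ≤ (1/2 : ℝ) * (M*(S-1) + (-m)*(S+1)) := by linarith
  -- main inequality
  have hmain : (d : ℝ) - s + (2 / d) * s - 2 / d ≤
      (1 / 2 : ℝ) * (M * (S - 1) + |m| * (S + 1)) := by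
    rw [habs]
    rw [← mul_le_mul_iff_right₀ hd0]
    have e : (d:ℝ) * ((d:ℝ) - s + (2/d)*s - 2/d) = (d:ℝ)*(d:ℝ) - (d:ℝ)*s + 2*s - 2 := by
      field_simp
    rw [e]
    nlinarith [mul_le_mul_of_nonneg_left hF1 hd0.le, hu]
  refine ⟨hmain, ?_, ?_⟩
  · -- equality implies the extremal structure
    intro heq
    rw [habs] at heq
    have h1 : (d:ℝ) - (M+m) ≤ (d:ℝ) - s + (2/d)*s - 2/d := heq ▸ hF1
    have h2 : (d:ℝ)*((d:ℝ) - (M+m)) ≤ (d:ℝ)*((d:ℝ) - s + (2/d)*s - 2/d) :=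
      mul_le_mul_of_nonneg_left h1 hd0.le
    have e : (d:ℝ)*((d:ℝ) - s + (2/d)*s - 2/d) = (d:ℝ)*(d:ℝ) - (d:ℝ)*s + 2*s - 2 := by
      field_simp
    rw [e] at h2
    have hueq : (d:ℝ)*(M+m) = 2 + ((d:ℝ)-2)*s := by
      have h2' : (d:ℝ)*(M+m) ≥ 2 + ((d:ℝ)-2)*s := by nlinarith only [h2]
      linarith only [hu, h2']
    by_cases hd3 : 3 ≤ d
    · -- case d ≥ 3
      have hd3R : (3:ℝ) ≤ (d:ℝ) := by exact_mod_cast hd3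
      have hd2pos : (0:ℝ) < (d:ℝ) - 2 := by linarith
      have hB' : 0 ≤ ((d:ℝ)-2)*((d:ℝ)-M^2-m^2) - (1-M-m)^2 := by linarith only [hB]
      have h0 : ((d:ℝ)-1)*((((d:ℝ)-2)*s)^2 - ((d:ℝ)*(M+m)-2)^2) = 0 := by
        linear_combination (-(((d:ℝ)-1))*((d:ℝ)*(M+m)-2+((d:ℝ)-2)*s))*hueq
      rw [hident] at h0
      have hzero : 2*((d:ℝ)-2)*((M+m) - (d:ℝ) - (d:ℝ)*(M*m))
          + (d:ℝ)*(((d:ℝ)-2)*((d:ℝ)-M^2-m^2) - (1-M-m)^2) = 0 :=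
        (mul_eq_zero.mp h0).resolve_left hd0.ne'
      have hslackA : (M+m) - (d:ℝ) - (d:ℝ)*(M*m) = 0 := by
        have hXle : (M+m) - (d:ℝ) - (d:ℝ)*(M*m) ≤ 0 := by
          linarith only [hzero, hA, mul_nonneg hd0.le hB',
            mul_nonneg (show (0:ℝ) ≤ (d:ℝ)-3 by linarith) hA]
        linarith only [hA, hXle]
      have hslackB : ((d:ℝ)-2)*((d:ℝ)-M^2-m^2) - (1-M-m)^2 = 0 := by
        have hdz : ((d:ℝ)-2)*((M+m) - (d:ℝ) - (d:ℝ)*(M*m)) = 0 :=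
          mul_eq_zero_of_right _ hslackA
        have hYle : ((d:ℝ)-2)*((d:ℝ)-M^2-m^2) - (1-M-m)^2 ≤ 0 := by
          linarith only [hzero, hdz, mul_nonneg (show (0:ℝ) ≤ (d:ℝ)-1 by linarith) hB']
        linarith only [hB', hYle]
      -- every entry is M or m
      have hall : ∀ j, v j = M ∨ v j = m := by
        have hsz : ∑ j, (M - v j)*(v j - m) = 0 := by rw [hAsum]; linarith only [hslackA]
        have hterm := (Finset.sum_eq_zero_iff_of_nonneg (fun j _ =>
          mul_nonneg (by linarith [hvM j]) (by linarith [hvm j]))).mp hsz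
        intro j
        rcases mul_eq_zero.mp (hterm j (Finset.mem_univ j)) with h | h
        · exact Or.inl (by linarith only [sub_eq_zero.mp h])
        · exact Or.inr (by linarith only [sub_eq_zero.mp h])
      -- the middle entries are all equal
      have hTconst : ∀ i ∈ T, ∀ j ∈ T, v i = v j := by
        have hdz : ∑ i ∈ T, ∑ j ∈ T, (v i - v j)^2 = 0 := by
          rw [dbl_sum_sq, hTcard, hTsum, hTsq]; linarith only [hslackB]
        have houter := (Finset.sum_eq_zero_iff_of_nonneg (fun i _ =>
          Finset.sum_nonneg fun j _ => sq_nonneg _)).mp hdz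
        intro i hi j hj
        have hinner := (Finset.sum_eq_zero_iff_of_nonneg (fun j _ => sq_nonneg _)).mp
          (houter i hi) j hj
        have := sq_eq_zero_iff.mp hinner
        linarith only [sub_eq_zero.mp this]
      have hTne : T.Nonempty := by
        apply Finset.card_pos.mp
        have : (0:ℝ) < (T.card : ℝ) := by rw [hTcard]; linarith only [hd3R]
        exact_mod_cast this
      obtain ⟨i0, hi0⟩ := hTne
      rcases hall i0 with hM' | hm'
      · -- middle entries all equal M : contradiction
        have hTM : ∀ j ∈ T, v j = M := fun j hj => (hTconst j hj i0 hi0).trans hM'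
        have hTsumM : ∑ j ∈ T, v j = ((d:ℝ)-2)*M := by
          rw [Finset.sum_congr rfl hTM, Finset.sum_const, nsmul_eq_mul, hTcard]
        have hsum' : ((d:ℝ)-1)*M + m = 1 := by
          rw [hTsumM] at hTsum; linarith only [hTsum]
        have h5 : (d:ℝ)*(((d:ℝ)-1)*M + m) = (d:ℝ)*1 := by rw [hsum']
        have h6 : ((d:ℝ)-2)*((d:ℝ)*M - (1-s)) = 0 := by linarith only [h5, hueq]
        have h7 : (d:ℝ)*M = 1 - s := by
          have := (mul_eq_zero.mp h6).resolve_left hd2pos.ne'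
          linarith only [sub_eq_zero.mp this]
        nlinarith only [mul_pos hd0 hM0, hs1, h7]
      · -- middle entries all equal m : the extremal configuration
        have hTm : ∀ j ∈ T, v j = m := fun j hj => (hTconst j hj i0 hi0).trans hm'
        have hTsumm : ∑ j ∈ T, v j = ((d:ℝ)-2)*m := by
          rw [Finset.sum_congr rfl hTm, Finset.sum_const, nsmul_eq_mul, hTcard]
        have hsum' : M + ((d:ℝ)-1)*m = 1 := by
          rw [hTsumm] at hTsum; linarith only [hTsum]
        have h5 : (d:ℝ)*(M + ((d:ℝ)-1)*m) = (d:ℝ)*1 := by rw [hsum']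
        have h6 : ((d:ℝ)-2)*((d:ℝ)*m - (1-s)) = 0 := by linarith only [h5, hueq]
        have hmval : (d:ℝ)*m = 1 - s := by
          have := (mul_eq_zero.mp h6).resolve_left hd2pos.ne'
          linarith only [sub_eq_zero.mp this]
        have hMval : (d:ℝ)*M = ((d:ℝ)-1)*s + 1 := by linarith only [hueq, hmval]
        refine ⟨jM, ?_, ?_⟩
        · rw [hjM, eq_div_iff hd0.ne']; linarith only [hMval]
        · intro j hj
          rw [eq_div_iff hd0.ne']
          by_cases hjm2 : j = jm
          · rw [hjm2, hjm]; linarith only [hmval]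
          · have hjT : j ∈ T := Finset.mem_erase.mpr
              ⟨hjm2, Finset.mem_erase.mpr ⟨hj, Finset.mem_univ j⟩⟩
            rw [hTm j hjT]; linarith only [hmval]
    · -- case d = 2
      have hd2 : d = 2 := by omega
      have hdR : (d:ℝ) = 2 := by rw [hd2]; norm_num
      have hcard : ({jM, jm} : Finset (Fin d)).card = 2 := by
        rw [Finset.card_insert_of_notMem (by simp [hne]), Finset.card_singleton]
      have huniv : (Finset.univ : Finset (Fin d)) = {jM, jm} :=
        (Finset.eq_of_subset_of_card_le (Finset.subset_univ _)
          (by rw [Finset.card_univ, Fintype.card_fin, hcard]; omega)).symm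
      have hsum2 : M + m = 1 := by
        have := hsum
        rw [huniv, Finset.sum_pair hne, hjM, hjm] at this
        exact this
      have hsq2 : M^2 + m^2 = 2 := by
        have := hsq
        rw [huniv, Finset.sum_pair hne, hjM, hjm, hdR] at this
        exact this
      have h3 : (M - m)^2 = s^2 := by
        linear_combination 2*hsq2 - (M+m+1)*hsum2 - hs2 - hdR
      have h4 : (M - m - s)*(M - m + s) = 0 := by linear_combination h3
      have hMm : M - m = s := by
        rcases mul_eq_zero.mp h4 with h | h
        · linarith only [sub_eq_zero.mp h]
        · exfalso; linarith only [hM0, hm0, hs1, h]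
      refine ⟨jM, ?_, ?_⟩
      · rw [hjM, hdR, eq_div_iff (by norm_num : (2:ℝ) ≠ 0)]; linarith only [hsum2, hMm]
      · intro j hj
        have hjmem : j = jM ∨ j = jm := by
          have hmem := Finset.mem_univ j
          rw [huniv] at hmem
          simpa using hmem
        rcases hjmem with h | h
        · exact absurd h hj
        · rw [h, hjm, eq_div_iff (by rw [hdR]; norm_num : (d:ℝ) ≠ 0), hdR]; linarith only [hsum2, hMm]
  · -- the extremal structure implies equality
    rintro ⟨j₀, ha, hb⟩
    have hA0 : (0:ℝ) ≤ (((d:ℝ)-1)*s+1)/d := div_nonneg (by nlinarith) hd0.le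
    have hB0 : (1-s)/(d:ℝ) ≤ 0 := by
      rw [div_nonpos_iff]; right; exact ⟨by linarith, hd0.le⟩
    have hBA : (1-s)/(d:ℝ) ≤ (((d:ℝ)-1)*s+1)/(d:ℝ) := by
      rw [div_le_div_iff₀ hd0 hd0]; nlinarith
    have hMa : M = (((d:ℝ)-1)*s+1)/d := by
      refine le_antisymm (ciSup_le fun j => ?_) (ha ▸ hvM j₀)
      by_cases hj : j = j₀
      · rw [hj, ha]
      · rw [hb j hj]; exact hBA
    have hmb : m = (1-s)/(d:ℝ) := by
      obtain ⟨j1, hj1⟩ := exists_ne j₀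
      refine le_antisymm ((hb j1 hj1) ▸ hvm j1) (le_ciInf fun j => ?_)
      by_cases hj : j = j₀
      · rw [hj, ha]; exact hBA
      · rw [hb j hj]
    have e1 : ∑ j ∈ Finset.univ.erase j₀, |v j| + |v j₀| = S :=
      Finset.sum_erase_add _ _ (Finset.mem_univ j₀)
    have e2 : ∑ j ∈ Finset.univ.erase j₀, |v j| = ((d:ℝ)-1) * (-((1-s)/(d:ℝ))) := by
      have hc : ∀ j ∈ Finset.univ.erase j₀, |v j| = -((1-s)/(d:ℝ)) := by
        intro j hj
        rw [hb j (Finset.mem_erase.mp hj).1, abs_of_nonpos hB0]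
      rw [Finset.sum_congr rfl hc, Finset.sum_const,
        Finset.card_erase_of_mem (Finset.mem_univ _), Finset.card_univ, Fintype.card_fin,
        nsmul_eq_mul, Nat.cast_sub (by omega : 1 ≤ d)]
      push_cast; ring
    have e3 : |v j₀| = (((d:ℝ)-1)*s+1)/d := by rw [ha, abs_of_nonneg hA0]
    have hSv : S = (2*((d:ℝ)-1)*s+2-(d:ℝ))/d := by
      have e4 : ((d:ℝ)-1)*(-((1-s)/(d:ℝ))) + (((d:ℝ)-1)*s+1)/d
          = (2*((d:ℝ)-1)*s+2-(d:ℝ))/d := by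
        field_simp; ring
      rw [← e1, e2, e3, e4]
    rw [habs, hMa, hmb, hSv]
    field_simp
    linear_combination (2*(d:ℝ)*((d:ℝ)-1)) * hs2
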